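/- (Freedman's inequality for supermartingales.) Let (S_0, S_1, …) be a supermartingale with respect to a filtration (ℱ_i)_{i≥0} on a probability space, and suppose there is a constant B > 0 such that S_{i+1} − S_i ≤ B almost surely for all i. For t ≥ 0 let V_t = Σ_{i=0}^{t−1} E[(S_{i+1} − S_i)^2 | ℱ_i]. Then for any s, v > 0, the probability that there exists some t ≥ 0 with S_t ≥ S_0 + s and V_t ≤ v is at most exp( − s^2 / (2(v + B s)) ). -/

import Mathlib

open scoped Nat

lemma fr_exp_tsum (x : ℝ) :
    Real.exp x - 1 - x = ∑' n : ℕ, x ^ (n + 2) / (n + 2)! := by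
  have hs : Summable (fun n : ℕ => x ^ n / n !) := Real.summable_pow_div_factorial x
  have hsum : Real.exp x = ∑' n : ℕ, x ^ n / n ! := by
    rw [Real.exp_eq_exp_ℝ, NormedSpace.exp_eq_tsum_div]
  have h1 : Summable (fun n : ℕ => x ^ (n + 1) / (n + 1)!) :=
    (summable_nat_add_iff 1).2 hs
  rw [hsum, hs.tsum_eq_zero_add, h1.tsum_eq_zero_add]
  simp [Nat.factorial]

lemma fr_summable (x : ℝ) : Summable (fun n : ℕ => x ^ (n + 2) / (n + 2)!) :=
  (summable_nat_add_iff 2).2 (Real.summable_pow_div_factorial x)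

lemma fr_exp_quad_nonpos {u : ℝ} (hu : u ≤ 0) : Real.exp u ≤ 1 + u + u ^ 2 / 2 := by
  have hder : ∀ t : ℝ, HasDerivAt (fun t : ℝ => 1 - t + t ^ 2 / 2 - Real.exp (-t))
      (-1 + t - -Real.exp (-t)) t := by
    intro t
    have h1 : HasDerivAt (fun t : ℝ => Real.exp (-t)) (-Real.exp (-t)) t := by
      simpa using ((hasDerivAt_id t).neg).exp
    have h2 : HasDerivAt (fun t : ℝ => 1 - t + t ^ 2 / 2) (-1 + t) t := by
      have h3 := (hasDerivAt_pow 2 t).div_const 2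
      have h4 := ((hasDerivAt_const t (1 : ℝ)).sub (hasDerivAt_id t)).add h3
      convert h4 using 1 <;> first | rfl | simp
    exact h2.sub h1
  have hmono : MonotoneOn (fun t : ℝ => 1 - t + t ^ 2 / 2 - Real.exp (-t)) (Set.Ici 0) := by
    refine monotoneOn_of_deriv_nonneg (convex_Ici 0)
      (fun t _ => (hder t).differentiableAt.continuousAt.continuousWithinAt)
      (fun t _ => (hder t).differentiableAt.differentiableWithinAt) ?_
    intro t ht
    rw [(hder t).deriv]
    have := Real.add_one_le_exp (-t)
    linarith
  have h0 : (fun t : ℝ => 1 - t + t ^ 2 / 2 - Real.exp (-t)) 0 ≤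
      (fun t : ℝ => 1 - t + t ^ 2 / 2 - Real.exp (-t)) (-u) := by
    exact hmono (Set.self_mem_Ici) (by simpa using neg_nonneg.2 hu) (by linarith)
  norm_num [Real.exp_zero] at h0
  nlinarith [h0]

lemma fr_key_scalar {c : ℝ} (hc : 0 < c) {u : ℝ} (hu : u ≤ c) :
    c ^ 2 * (Real.exp u - 1 - u) ≤ u ^ 2 * (Real.exp c - 1 - c) := by
  rcases le_or_gt u 0 with h0 | h0
  · have h1 : Real.exp u - 1 - u ≤ u ^ 2 / 2 := by
      have := fr_exp_quad_nonpos h0; linarith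
    have h2 : 1 + c + c ^ 2 / 2 ≤ Real.exp c := by
      have h3 := Real.sum_le_exp_of_nonneg hc.le 3
      have : ∑ i ∈ Finset.range 3, c ^ i / i ! = 1 + c + c ^ 2 / 2 := by
        simp [Finset.sum_range_succ, Nat.factorial]
      linarith [h3, this ▸ h3]
    nlinarith [sq_nonneg u, sq_nonneg c, sq_nonneg (u*c)]
  · rw [fr_exp_tsum u, fr_exp_tsum c, ← tsum_mul_left, ← tsum_mul_left]
    refine Summable.tsum_le_tsum (fun n => ?_) ((fr_summable u).mul_left _) ((fr_summable c).mul_left _)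
    rw [mul_div_assoc', mul_div_assoc', div_le_div_iff₀ (by positivity) (by positivity)]
    have hpow : u ^ n ≤ c ^ n := pow_le_pow_left₀ h0.le hu n
    have : c ^ 2 * u ^ (n + 2) ≤ u ^ 2 * c ^ (n + 2) := by
      have : c ^ 2 * u ^ (n + 2) = (c ^ 2 * u ^ 2) * u ^ n := by ring
      rw [this]
      have : u ^ 2 * c ^ (n + 2) = (c ^ 2 * u ^ 2) * c ^ n := by ring
      rw [this]
      exact mul_le_mul_of_nonneg_left hpow (by positivity)
    exact mul_le_mul_of_nonneg_right this (by positivity)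

lemma fr_exp_geom {c : ℝ} (hc0 : 0 < c) (hc1 : c < 1) :
    Real.exp c - 1 - c ≤ c ^ 2 / (2 * (1 - c)) := by
  have hgeom : Summable (fun n : ℕ => c ^ 2 / 2 * c ^ n) :=
    (summable_geometric_of_lt_one hc0.le hc1).mul_left _
  have h1 : Real.exp c - 1 - c ≤ ∑' n : ℕ, c ^ 2 / 2 * c ^ n := by
    rw [fr_exp_tsum c]
    refine Summable.tsum_le_tsum (fun n => ?_) (fr_summable c) hgeom
    have h2 : (2 : ℝ) ≤ (n + 2)! := by
      exact_mod_cast Nat.le_of_dvd (Nat.factorial_pos _) (Nat.dvd_factorial (by omega) (by omega))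
    rw [div_le_iff₀ (by positivity)]
    have : c ^ 2 / 2 * c ^ n * 2 = c ^ (n + 2) := by ring
    calc c ^ (n + 2) = c ^ 2 / 2 * c ^ n * 2 := by ring
      _ ≤ c ^ 2 / 2 * c ^ n * (n + 2)! := by
          exact mul_le_mul_of_nonneg_left h2 (by positivity)
  rw [tsum_mul_left, tsum_geometric_of_lt_one hc0.le hc1] at h1
  refine h1.trans_eq ?_
  have h1c : (1 : ℝ) - c ≠ 0 := by linarith
  field_simp

lemma fr_exp_le_affine {B l d : ℝ} (hB : 0 < B) (hl : 0 < l) (hd : d ≤ B) :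
    Real.exp (l * d) ≤ 1 + l * d + (Real.exp (l * B) - 1 - l * B) / B ^ 2 * d ^ 2 := by
  have hc : 0 < l * B := mul_pos hl hB
  have hkey := fr_key_scalar hc (u := l * d) (mul_le_mul_of_nonneg_left hd hl.le)
  have hB2 : (0 : ℝ) < B ^ 2 := by positivity
  have hl2 : (0 : ℝ) < l ^ 2 := by positivity
  have h2 : Real.exp (l * d) - 1 - l * d ≤ (Real.exp (l * B) - 1 - l * B) / B ^ 2 * d ^ 2 := by
    rw [div_mul_eq_mul_div, le_div_iff₀ hB2]
    nlinarith [hkey, hl2]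
  linarith

open MeasureTheory

/-- Freedman's inequality for supermartingales: if `(S_i)` is a supermartingale
with respect to a filtration `(ℱ_i)` whose increments are bounded above by `B > 0` almost
surely, and `V_t = Σ_{i<t} E[(S_{i+1} − S_i)² | ℱ_i]`, then for any `s, v > 0` the probability
that `S_t ≥ S_0 + s` and `V_t ≤ v` for some `t` is at most `exp(−s²/(2(v + Bs)))`. -/
theorem freedman_inequality
    {Ω : Type*} {m0 : MeasurableSpace Ω} {μ : Measure Ω} [IsProbabilityMeasure μ]
    (ℱ : Filtration ℕ m0) (S : ℕ → Ω → ℝ)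
    (hS : Supermartingale S ℱ μ)
    (B : ℝ) (hB : 0 < B)
    (hbdd : ∀ i : ℕ, ∀ᵐ ω ∂μ, S (i + 1) ω - S i ω ≤ B)
    (hint : ∀ i : ℕ, Integrable (fun ω => (S (i + 1) ω - S i ω) ^ 2) μ)
    (s v : ℝ) (hs : 0 < s) (hv : 0 < v) :
    μ {ω | ∃ t : ℕ, S 0 ω + s ≤ S t ω ∧
        (∑ i ∈ Finset.range t,
          (μ[fun ω' => (S (i + 1) ω' - S i ω') ^ 2|ℱ i]) ω) ≤ v}
      ≤ ENNReal.ofReal (Real.exp (-(s ^ 2) / (2 * (v + B * s)))) := by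
  have hvBs : (0 : ℝ) < v + B * s := by positivity
  set l : ℝ := s / (v + B * s) with hl_def
  have hl : 0 < l := by positivity
  set c : ℝ := l * B with hc_def
  have hc0 : 0 < c := mul_pos hl hB
  have hc1 : c < 1 := by
    rw [hc_def, hl_def, div_mul_eq_mul_div, div_lt_one hvBs]
    nlinarith
  set g : ℝ := (Real.exp c - 1 - c) / B ^ 2 with hg_def
  have hg0 : 0 ≤ g := by
    have := Real.add_one_le_exp c
    have hB2 : (0 : ℝ) < B ^ 2 := by positivity
    rw [hg_def]
    apply div_nonneg _ hB2.le
    linarith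
  set X : ℕ → Ω → ℝ := fun i => μ[fun ω' => (S (i + 1) ω' - S i ω') ^ 2|ℱ i] with hX_def
  set M : ℕ → Ω → ℝ := fun t ω =>
    Real.exp (l * (S t ω - S 0 ω) - g * ∑ i ∈ Finset.range t, X i ω) with hM_def
  -- measurability of M t w.r.t. ℱ t
  have hM_meas : ∀ t, StronglyMeasurable[ℱ t] (M t) := by
    intro t
    apply Real.continuous_exp.comp_stronglyMeasurable
    apply StronglyMeasurable.sub
    · exact ((hS.stronglyAdapted t).sub ((hS.stronglyAdapted 0).mono (ℱ.mono (Nat.zero_le t)))).const_mul l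
    · refine StronglyMeasurable.const_mul ?_ g
      refine Finset.stronglyMeasurable_fun_sum _ fun i hi => ?_
      exact stronglyMeasurable_condExp.mono (ℱ.mono (Finset.mem_range.mp hi).le)
  have hM_pos : ∀ t ω, 0 < M t ω := fun t ω => Real.exp_pos _
  -- a.e. bound
  have hbdd' : ∀ᵐ ω ∂μ, ∀ i, S (i + 1) ω - S i ω ≤ B := ae_all_iff.2 hbdd
  have hX_nonneg : ∀ᵐ ω ∂μ, ∀ i, 0 ≤ X i ω := by
    rw [ae_all_iff]
    exact fun i => condExp_nonneg (Filter.Eventually.of_forall fun ω => sq_nonneg _)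
  have hM_bdd : ∀ t, ∀ᵐ ω ∂μ, M t ω ≤ Real.exp (l * (t * B)) := by
    intro t
    filter_upwards [hbdd', hX_nonneg] with ω hω hXω
    have hSt : S t ω - S 0 ω ≤ t * B := by
      have htel : ∑ i ∈ Finset.range t, (S (i + 1) ω - S i ω) = S t ω - S 0 ω :=
        Finset.sum_range_sub (fun i => S i ω) t
      calc S t ω - S 0 ω = ∑ i ∈ Finset.range t, (S (i + 1) ω - S i ω) := htel.symm
        _ ≤ ∑ _i ∈ Finset.range t, B := Finset.sum_le_sum fun i _ => hω i
        _ = t * B := by simp [mul_comm]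
    have hV : 0 ≤ ∑ i ∈ Finset.range t, X i ω :=
      Finset.sum_nonneg fun i _ => hXω i
    apply Real.exp_le_exp.2
    nlinarith
  have hM_int : ∀ t, Integrable (M t) μ := by
    intro t
    refine Integrable.mono' (integrable_const (Real.exp (l * (t * B))))
      ((hM_meas t).mono (ℱ.le t)).aestronglyMeasurable ?_
    filter_upwards [hM_bdd t] with ω hω
    rw [Real.norm_eq_abs, abs_of_pos (hM_pos t ω)]
    exact hω
  -- supermartingale property
  have hMsuper : Supermartingale M ℱ μ := by
    refine supermartingale_nat hM_meas hM_int fun t => ?_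
    set Δ : Ω → ℝ := fun ω => S (t + 1) ω - S t ω with hΔ_def
    set F : Ω → ℝ := fun ω => M t ω * Real.exp (-(g * X t ω)) with hF_def
    set G : Ω → ℝ := fun ω => Real.exp (l * Δ ω) with hG_def
    have hfact : M (t + 1) = F * G := by
      funext ω
      show Real.exp _ = _ * _
      rw [hF_def, hG_def, hM_def]
      simp only
      rw [← Real.exp_add, ← Real.exp_add]
      congr 1
      rw [Finset.sum_range_succ, hΔ_def]
      ring
    have hF_meas : StronglyMeasurable[ℱ t] F :=
      (hM_meas t).mul (Real.continuous_exp.comp_stronglyMeasurable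
        ((stronglyMeasurable_condExp.const_mul g).neg))
    have hΔ_meas : AEStronglyMeasurable Δ μ :=
      (((hS.stronglyAdapted (t + 1)).mono (ℱ.le (t + 1))).sub
        ((hS.stronglyAdapted t).mono (ℱ.le t))).aestronglyMeasurable
    have hG_int : Integrable G μ := by
      refine Integrable.mono' (integrable_const (Real.exp c))
        (Real.continuous_exp.comp_aestronglyMeasurable (hΔ_meas.const_mul l)) ?_
      filter_upwards [hbdd t] with ω hω
      rw [Real.norm_eq_abs, abs_of_pos (Real.exp_pos _)]
      exact Real.exp_le_exp.2 (by
        rw [hc_def]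
        exact mul_le_mul_of_nonneg_left hω hl.le)
    have hFG_int : Integrable (F * G) μ := hfact ▸ hM_int (t + 1)
    have hpull : μ[F * G|ℱ t] =ᵐ[μ] F * μ[G|ℱ t] :=
      condExp_mul_of_stronglyMeasurable_left hF_meas hFG_int hG_int
    have hΔ_int : Integrable Δ μ := (hS.integrable (t + 1)).sub (hS.integrable t)
    have hΔsq_int : Integrable (fun ω => Δ ω ^ 2) μ := hint t
    have hRHS_int : Integrable (fun ω => 1 + l * Δ ω + g * Δ ω ^ 2) μ :=
      ((integrable_const (1 : ℝ)).add (hΔ_int.const_mul l)).add (hΔsq_int.const_mul g)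
    have hG_le_aff : G ≤ᵐ[μ] fun ω => 1 + l * Δ ω + g * Δ ω ^ 2 := by
      filter_upwards [hbdd t] with ω hω
      have := fr_exp_le_affine hB hl (d := Δ ω) hω
      simpa [hg_def, hc_def] using this
    have h1 : μ[G|ℱ t] ≤ᵐ[μ] μ[fun ω => 1 + l * Δ ω + g * Δ ω ^ 2|ℱ t] :=
      condExp_mono hG_int hRHS_int hG_le_aff
    have hsplit : μ[fun ω => 1 + l * Δ ω + g * Δ ω ^ 2|ℱ t]
        =ᵐ[μ] fun ω => 1 + l * (μ[Δ|ℱ t]) ω + g * X t ω := by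
      have heq : (fun ω => 1 + l * Δ ω + g * Δ ω ^ 2)
          = ((fun _ => (1 : ℝ)) + l • Δ) + g • (fun ω => Δ ω ^ 2) := rfl
      rw [heq]
      refine (condExp_add ((integrable_const (1 : ℝ)).add (hΔ_int.smul l))
        (hΔsq_int.smul g) _).trans ?_
      have e2 := condExp_add (μ := μ) (m := ℱ t) (integrable_const (1 : ℝ)) (hΔ_int.smul l)
      have e3 := condExp_smul (μ := μ) (m := ℱ t) l Δ
      have e4 := condExp_smul (μ := μ) (m := ℱ t) g (fun ω => Δ ω ^ 2)
      have e5 : μ[fun _ => (1 : ℝ)|ℱ t] = fun _ => (1 : ℝ) := condExp_const (ℱ.le t) 1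
      filter_upwards [e2, e3, e4] with ω hω2 hω3 hω4
      simp only [Pi.add_apply, Pi.smul_apply, smul_eq_mul] at *
      rw [hω2, hω3, hω4, e5]
    have hΔ_le : μ[Δ|ℱ t] ≤ᵐ[μ] 0 := by
      have hsub : μ[Δ|ℱ t] =ᵐ[μ] μ[S (t + 1)|ℱ t] - μ[S t|ℱ t] :=
        condExp_sub (hS.integrable (t + 1)) (hS.integrable t) _
      have hle := hS.condExp_ae_le (Nat.le_succ t)
      have hid : μ[S t|ℱ t] = S t :=
        condExp_of_stronglyMeasurable (ℱ.le t) (hS.stronglyAdapted t) (hS.integrable t)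
      filter_upwards [hsub, hle] with ω hω1 hω2
      rw [Pi.zero_apply]
      rw [hω1, Pi.sub_apply, hid]
      linarith
    calc μ[M (t + 1)|ℱ t] =ᵐ[μ] F * μ[G|ℱ t] := hfact ▸ hpull
      _ ≤ᵐ[μ] M t := by
        filter_upwards [h1, hsplit, hΔ_le] with ω hω1 hω2 hω3
        have hXle : (μ[G|ℱ t]) ω ≤ Real.exp (g * X t ω) := by
          have h5 : (μ[G|ℱ t]) ω ≤ 1 + g * X t ω := by
            rw [hω2] at hω1
            have : l * (μ[Δ|ℱ t]) ω ≤ 0 :=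
              mul_nonpos_of_nonneg_of_nonpos hl.le hω3
            linarith
          have h6 := Real.add_one_le_exp (g * X t ω)
          linarith
        have hFpos : 0 ≤ F ω := le_of_lt (mul_pos (hM_pos t ω) (Real.exp_pos _))
        calc (F * μ[G|ℱ t]) ω = F ω * (μ[G|ℱ t]) ω := rfl
          _ ≤ F ω * Real.exp (g * X t ω) := mul_le_mul_of_nonneg_left hXle hFpos
          _ = M t ω := by
            rw [hF_def]
            simp only
            rw [mul_assoc, ← Real.exp_add]
            simp
  -- maximal inequality for the nonnegative supermartingale M
  set c' : ℝ := Real.exp (l * s - g * v) with hc'_def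
  have hc'pos : 0 < c' := Real.exp_pos _
  set A : ℕ → Set Ω := fun n => {ω | ∃ k ≤ n, c' ≤ M k ω} with hA_def
  have hA_meas : ∀ n, MeasurableSet (A n) := by
    intro n
    have : A n = ⋃ k ∈ Set.Iic n, {ω | c' ≤ M k ω} := by
      ext ω; simp [hA_def]
    rw [this]
    exact MeasurableSet.biUnion (Set.to_countable _) fun k _ =>
      measurableSet_le measurable_const ((hM_meas k).mono (ℱ.le k)).measurable
  have hA_bound : ∀ n, μ (A n) ≤ ENNReal.ofReal (1 / c') := by
    intro n
    set τ : Ω → WithTop ℕ := fun ω => (hittingBtwn M {y : ℝ | c' ≤ y} 0 n ω : ℕ) with hτ_def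
    have hτ_st : IsStoppingTime ℱ τ :=
      Adapted.isStoppingTime_hittingBtwn hMsuper.stronglyAdapted.adapted measurableSet_Ici
    have hτ_le : ∀ ω, τ ω ≤ n := fun ω => WithTop.coe_le_coe.2 (hittingBtwn_le ω)
    have hSV_int : Integrable (stoppedValue M τ) μ :=
      integrable_stoppedValue ℕ hτ_st hM_int hτ_le
    have hM0 : ∀ ω, M 0 ω = 1 := fun ω => by simp [hM_def]
    have hexp : ∫ ω, stoppedValue M τ ω ∂μ ≤ 1 := by
      have h := (hMsuper.neg).expected_stoppedValue_mono
        (isStoppingTime_const ℱ 0) hτ_st (fun ω => WithTop.coe_le_coe.2 (Nat.zero_le _)) hτ_le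
      rw [stoppedValue_const] at h
      have hneg1 : stoppedValue (-M) τ = -(stoppedValue M τ) := rfl
      have hneg2 : (-M) 0 = -(M 0) := rfl
      rw [hneg1, hneg2] at h
      simp only [Pi.neg_apply] at h
      rw [integral_neg, integral_neg] at h
      have hint0 : ∫ ω, M 0 ω ∂μ = 1 := by
        have heq1 : M 0 = fun _ => (1 : ℝ) := funext hM0
        rw [heq1]
        simp
      rw [hint0] at h
      linarith
    have hconst : c' * (μ (A n)).toReal ≤ 1 := by
      have hge : ∀ ω ∈ A n, c' ≤ stoppedValue M τ ω := by
        intro ω hω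
        obtain ⟨k, hk, hck⟩ := hω
        exact stoppedValue_hittingBtwn_mem ⟨k, ⟨Nat.zero_le k, hk⟩, hck⟩
      have h1 := setIntegral_ge_of_const_le (hA_meas n) (measure_ne_top μ _) hge
        hSV_int.integrableOn
      have h2 := setIntegral_le_integral (s := A n) hSV_int
        (Filter.Eventually.of_forall fun ω => (hM_pos _ ω).le)
      simpa [smul_eq_mul, mul_comm, Measure.real] using h1.trans (h2.trans hexp)
    have htoReal : (μ (A n)).toReal ≤ 1 / c' := by
      rw [le_div_iff₀ hc'pos]
      linarith [hconst]
    calc μ (A n) = ENNReal.ofReal ((μ (A n)).toReal) :=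
          (ENNReal.ofReal_toReal (measure_ne_top μ _)).symm
      _ ≤ ENNReal.ofReal (1 / c') := ENNReal.ofReal_le_ofReal htoReal
  -- the event is contained in ⋃ n, A n
  have hsubset : {ω | ∃ t : ℕ, S 0 ω + s ≤ S t ω ∧
      (∑ i ∈ Finset.range t,
        (μ[fun ω' => (S (i + 1) ω' - S i ω') ^ 2|ℱ i]) ω) ≤ v} ⊆ ⋃ n, A n := by
    intro ω hω
    obtain ⟨t, h1, h2⟩ := hω
    have h2' : (∑ i ∈ Finset.range t, X i ω) ≤ v := h2
    refine Set.mem_iUnion.2 ⟨t, t, le_rfl, ?_⟩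
    show c' ≤ Real.exp (l * (S t ω - S 0 ω) - g * ∑ i ∈ Finset.range t, X i ω)
    rw [hc'_def]
    apply Real.exp_le_exp.2
    have ha : l * s ≤ l * (S t ω - S 0 ω) :=
      mul_le_mul_of_nonneg_left (by linarith) hl.le
    have hb : g * (∑ i ∈ Finset.range t, X i ω) ≤ g * v :=
      mul_le_mul_of_nonneg_left h2' hg0
    linarith
  have hmono : Monotone A := fun a b hab ω hω => by
    obtain ⟨k, hk, h⟩ := hω; exact ⟨k, hk.trans hab, h⟩
  have hmeasU : μ (⋃ n, A n) ≤ ENNReal.ofReal (1 / c') := by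
    rw [Directed.measure_iUnion hmono.directed_le]
    exact iSup_le hA_bound
  refine (measure_mono hsubset).trans (hmeasU.trans ?_)
  apply ENNReal.ofReal_le_ofReal
  -- final numeric bound
  have hlD : l * (v + B * s) = s := div_mul_cancel₀ s hvBs.ne'
  have h1c : 1 - c = v / (v + B * s) := by
    rw [hc_def, hl_def]
    field_simp
    ring
  have hg_le : g ≤ l * s / (2 * v) := by
    have h := fr_exp_geom hc0 hc1
    rw [hg_def]
    rw [div_le_iff₀ (by positivity : (0:ℝ) < B ^ 2)]
    refine h.trans ?_
    rw [h1c, hc_def]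
    have h2 : (l * B) ^ 2 / (2 * (v / (v + B * s)))
        = l * (l * (v + B * s)) * B ^ 2 / (2 * v) := by
      field_simp
    rw [h2, hlD]
    apply le_of_eq
    ring
  have hgv : g * v ≤ l * s / 2 := by
    calc g * v ≤ l * s / (2 * v) * v := mul_le_mul_of_nonneg_right hg_le hv.le
      _ = l * s / 2 := by field_simp
  have hhalf : l * s / 2 = s ^ 2 / (2 * (v + B * s)) := by
    rw [hl_def]
    field_simp
  rw [hc'_def, one_div, ← Real.exp_neg]
  apply Real.exp_le_exp.2
  have : -(s ^ 2) / (2 * (v + B * s)) = -(s ^ 2 / (2 * (v + B * s))) := by ring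
  rw [this]
  have hfin : s ^ 2 / (2 * (v + B * s)) ≤ l * s - g * v := by
    rw [← hhalf]
    linarith
  linarith
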